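/- If V is a finite vertex set of a finite simple graph G and the partition Q of V refines the partition P of V, then the mean square density of Q is at least the mean square density of P. -/

import Mathlib

open Finset
open scoped Classical

/-- The number of ordered pairs `(x, y) ∈ X × Y` joined by an edge of `G`. -/
noncomputable def edgeCount {V : Type*} (G : SimpleGraph V) (X Y : Finset V) : ℕ :=
  ((X ×ˢ Y).filter fun p => G.Adj p.1 p.2).card

/-- The edge density `d(X,Y) = e(X,Y) / (|X| |Y|)`. -/
noncomputable def density {V : Type*} (G : SimpleGraph V) (X Y : Finset V) : ℝ :=
  (edgeCount G X Y : ℝ) / ((X.card : ℝ) * (Y.card : ℝ))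

/-- The energy `q(U,W) = |U| |W| d(U,W)² / |V(G)|²` of a pair of vertex subsets. -/
noncomputable def energy {V : Type*} [Fintype V] (G : SimpleGraph V) (U W : Finset V) : ℝ :=
  (U.card : ℝ) * (W.card : ℝ) * (density G U W) ^ 2 / (Fintype.card V : ℝ) ^ 2

/-- The mean square density of a family of parts. -/
noncomputable def meanSquareDensity {V : Type*} [Fintype V] (G : SimpleGraph V)
    (P : Finset (Finset V)) : ℝ :=
  ∑ R ∈ P, ∑ S ∈ P, energy G R S

lemma edgeCount_eq_interedges {V : Type*} (G : SimpleGraph V) (X Y : Finset V) :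
    edgeCount G X Y = (Rel.interedges G.Adj X Y).card := by
  unfold edgeCount Rel.interedges
  congr

lemma energy_eq {V : Type*} [Fintype V] (G : SimpleGraph V) {U W : Finset V}
    (hU : U.Nonempty) (hW : W.Nonempty) :
    energy G U W = (edgeCount G U W : ℝ) ^ 2 / ((U.card : ℝ) * W.card)
      / (Fintype.card V : ℝ) ^ 2 := by
  have hU0 : (U.card : ℝ) ≠ 0 := Nat.cast_ne_zero.2 hU.card_pos.ne'
  have hW0 : (W.card : ℝ) ≠ 0 := Nat.cast_ne_zero.2 hW.card_pos.ne'
  unfold energy density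
  congr 1
  field_simp

/-- Refining a partition cannot decrease the mean square density. -/
theorem mean_square_density_increase {V : Type*} [Fintype V] (G : SimpleGraph V)
    (A : Finset V) (P Q : Finpartition A)
    (hQ : ∀ S ∈ Q.parts, ∃ R ∈ P.parts, S ⊆ R) :
    meanSquareDensity G P.parts ≤ meanSquareDensity G Q.parts := by
  classical
  set f : Finset V → Finset (Finset V) := fun R => Q.parts.filter (· ⊆ R) with hf
  -- each Q-part containing a point of a P-part is contained in it
  have key : ∀ R ∈ P.parts, ∀ S ∈ Q.parts, ∀ x, x ∈ R → x ∈ S → S ⊆ R := by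
    intro R hR S hS x hxR hxS
    obtain ⟨R', hR', hSR'⟩ := hQ S hS
    rwa [P.eq_of_mem_parts hR hR' hxR (hSR' hxS)]
  -- the Q-parts inside a P-part form a finpartition of it
  have hsup : ∀ R ∈ P.parts, (f R).sup id = R := by
    intro R hR
    apply le_antisymm
    · exact Finset.sup_le fun S hS => (mem_filter.1 hS).2
    · intro x hx
      obtain ⟨S, hS, hxS⟩ := Q.exists_mem (P.le hR hx)
      exact Finset.mem_sup.2 ⟨S, mem_filter.2 ⟨hS, key R hR S hS x hx hxS⟩, hxS⟩
  -- Q.parts decomposes as a disjoint union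
  have hbi : Q.parts = P.parts.biUnion f := by
    ext S
    simp only [mem_biUnion, hf, mem_filter]
    constructor
    · intro hS
      obtain ⟨R, hR, hSR⟩ := hQ S hS
      exact ⟨R, hR, hS, hSR⟩
    · rintro ⟨R, _, hS, _⟩
      exact hS
  have hdisj : (P.parts : Set (Finset V)).PairwiseDisjoint f := by
    intro R hR R' hR' hne
    refine Finset.disjoint_left.2 fun S hSR hSR' => ?_
    have h1 := (mem_filter.1 hSR).2
    have h2 := (mem_filter.1 hSR').2
    obtain ⟨x, hx⟩ := Q.nonempty_of_mem_parts (mem_filter.1 hSR).1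
    exact hne (P.eq_of_mem_parts hR hR' (h1 hx) (h2 hx))
  have hsum : ∀ g : Finset V → ℝ,
      ∑ S ∈ Q.parts, g S = ∑ R ∈ P.parts, ∑ S ∈ f R, g S := fun g => by
    rw [hbi, Finset.sum_biUnion hdisj]
  have hrw : meanSquareDensity G Q.parts
      = ∑ R ∈ P.parts, ∑ R' ∈ P.parts, ∑ S ∈ f R, ∑ S' ∈ f R', energy G S S' :=
    calc ∑ S ∈ Q.parts, ∑ S' ∈ Q.parts, energy G S S'
        = ∑ R ∈ P.parts, ∑ S ∈ f R, ∑ S' ∈ Q.parts, energy G S S' := hsum _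
      _ = ∑ R ∈ P.parts, ∑ S ∈ f R, ∑ R' ∈ P.parts, ∑ S' ∈ f R', energy G S S' :=
          Finset.sum_congr rfl fun R _ => Finset.sum_congr rfl fun S _ => hsum _
      _ = ∑ R ∈ P.parts, ∑ R' ∈ P.parts, ∑ S ∈ f R, ∑ S' ∈ f R', energy G S S' :=
          Finset.sum_congr rfl fun R _ => Finset.sum_comm
  rw [hrw]
  unfold meanSquareDensity
  refine Finset.sum_le_sum fun R hR => Finset.sum_le_sum fun R' hR' => ?_
  -- the key per-pair inequality, via Cauchy–Schwarz
  have PR : Finpartition R := Q.ofSubset (filter_subset _ _) (hsup R hR)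
  have PR' : Finpartition R' := Q.ofSubset (filter_subset _ _) (hsup R' hR')
  have hRne := P.nonempty_of_mem_parts hR
  have hR'ne := P.nonempty_of_mem_parts hR'
  have hn : (0:ℝ) < (Fintype.card V : ℝ) ^ 2 := by
    obtain ⟨x, _⟩ := hRne
    have : 0 < Fintype.card V := Fintype.card_pos_iff.2 ⟨x⟩
    positivity
  have hg : ∀ p ∈ (f R) ×ˢ (f R'), (0:ℝ) < (p.1.card : ℝ) * p.2.card := by
    rintro ⟨S, S'⟩ hp
    rw [mem_product] at hp
    have h1 := (Q.nonempty_of_mem_parts (mem_filter.1 hp.1).1).card_pos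
    have h2 := (Q.nonempty_of_mem_parts (mem_filter.1 hp.2).1).card_pos
    exact mul_pos (Nat.cast_pos.2 h1) (Nat.cast_pos.2 h2)
  -- decompositions
  have e_decomp : (edgeCount G R R' : ℝ)
      = ∑ p ∈ (f R) ×ˢ (f R'), (edgeCount G p.1 p.2 : ℝ) := by
    have := Rel.card_interedges_finpartition G.Adj
      (Q.ofSubset (filter_subset (· ⊆ R) _) (hsup R hR))
      (Q.ofSubset (filter_subset (· ⊆ R') _) (hsup R' hR'))
    simp only [Finpartition.ofSubset_parts] at this
    rw [edgeCount_eq_interedges, this]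
    push_cast
    refine Finset.sum_congr rfl fun p _ => ?_
    rw [edgeCount_eq_interedges]
  have card_decomp : (R.card : ℝ) * R'.card
      = ∑ p ∈ (f R) ×ˢ (f R'), (p.1.card : ℝ) * p.2.card := by
    have h1 : ∑ i ∈ f R, i.card = R.card :=
      (Q.ofSubset (filter_subset (· ⊆ R) _) (hsup R hR)).sum_card_parts
    have h2 : ∑ i ∈ f R', i.card = R'.card :=
      (Q.ofSubset (filter_subset (· ⊆ R') _) (hsup R' hR')).sum_card_parts
    calc (R.card : ℝ) * R'.card
        = (∑ x ∈ f R, (x.card : ℝ)) * ∑ y ∈ f R', (y.card : ℝ) := by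
          rw [← h1, ← h2]; push_cast; ring
      _ = ∑ x ∈ f R, ∑ y ∈ f R', (x.card : ℝ) * y.card := Finset.sum_mul_sum _ _ _ _
      _ = ∑ p ∈ (f R) ×ˢ (f R'), (p.1.card : ℝ) * p.2.card := by
          rw [Finset.sum_product]
  rw [energy_eq G hRne hR'ne]
  have hRHS : ∑ S ∈ f R, ∑ S' ∈ f R', energy G S S'
      = (∑ p ∈ (f R) ×ˢ (f R'),
          (edgeCount G p.1 p.2 : ℝ) ^ 2 / ((p.1.card : ℝ) * p.2.card))
        / (Fintype.card V : ℝ) ^ 2 := by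
    rw [← Finset.sum_product', Finset.sum_div]
    refine Finset.sum_congr rfl fun p hp => ?_
    rw [mem_product] at hp
    exact energy_eq G (Q.nonempty_of_mem_parts (mem_filter.1 hp.1).1)
      (Q.nonempty_of_mem_parts (mem_filter.1 hp.2).1)
  rw [hRHS]
  apply div_le_div_of_nonneg_right ?_ hn.le
  rw [e_decomp, card_decomp]
  exact Finset.sq_sum_div_le_sum_sq_div _ _ hg
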